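/- Let K be a constant with 1/3 < K < 1, let μ = (3K−1)/(1−K), let 0 ≤ T < 1, and let u : (T,1] → ℝ be differentiable with u'(t) = K·μ·t^{2μ−1} / (t^{2μ} + (1−K)·e^{2u(t)}) for all t ∈ (T,1]. Set c = (K/2)·ln(1 + e^{2u(1)}) − u(1). Then −c/(1−K) ≤ u(t) ≤ u(1) for all t ∈ (T,1]. -/

import Mathlib

open Real Set

/-- A priori bounds (3.16)-(3.17) from the proof of Proposition 3.1: with
`c = (K/2) ln(1 + e^(2 u(1))) - u(1)`, any solution of the background ODE on `(T,1]`
satisfies `-c/(1-K) ≤ u(t) ≤ u(1)`. -/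
theorem stmt_3 (K μ T : ℝ) (hK : 1/3 < K ∧ K < 1) (hμ : μ = (3*K - 1)/(1 - K))
    (hT : 0 ≤ T ∧ T < 1) (u : ℝ → ℝ)
    (hODE : ∀ t ∈ Ioc T 1,
      HasDerivAt u (K * μ * t ^ (2*μ - 1) / (t ^ (2*μ) + (1 - K) * Real.exp (2 * u t))) t) :
    ∀ t ∈ Ioc T 1,
      -((K/2) * Real.log (1 + Real.exp (2 * u 1)) - u 1) / (1 - K) ≤ u t ∧ u t ≤ u 1 := by
  obtain ⟨hK1, hK2⟩ := hK
  obtain ⟨hT0, hT1⟩ := hT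
  have hKpos : (0:ℝ) < K := lt_trans (by norm_num) hK1
  have h1K : (0:ℝ) < 1 - K := by linarith
  have hμpos : 0 < μ := by
    rw [hμ]; exact div_pos (by linarith) h1K
  -- positivity of t for t in Ioc T 1
  have htpos : ∀ t ∈ Ioc T 1, (0:ℝ) < t := fun t ht => lt_of_le_of_lt hT0 ht.1
  set G : ℝ → ℝ := fun t => u t - K/2 * Real.log (t ^ (2*μ) + Real.exp (2 * u t)) with hGdef
  -- G has derivative 0 on Ioc T 1
  have hG : ∀ t ∈ Ioc T 1, HasDerivAt G 0 t := by
    intro t ht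
    have ht0 : 0 < t := htpos t ht
    have hu := hODE t ht
    set d := K * μ * t ^ (2*μ - 1) / (t ^ (2*μ) + (1 - K) * Real.exp (2 * u t)) with hd
    have h1 : HasDerivAt (fun s : ℝ => s ^ (2*μ)) (2*μ * t ^ (2*μ - 1)) t :=
      Real.hasDerivAt_rpow_const (Or.inl ht0.ne')
    have h2 : HasDerivAt (fun s => Real.exp (2 * u s)) (Real.exp (2 * u t) * (2 * d)) t :=
      (hu.const_mul 2).exp
    have h3 := h1.add h2
    have hApos : 0 < t ^ (2*μ) + Real.exp (2 * u t) :=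
      add_pos (Real.rpow_pos_of_pos ht0 _) (Real.exp_pos _)
    have h4 := h3.log hApos.ne'
    have h5 := hu.sub (h4.const_mul (K/2))
    convert h5 using 1
    case e'_4 => rfl
    case e'_5 => rfl
    case e'_8 => rfl
    have hwpos : 0 < t ^ (2*μ) + (1 - K) * Real.exp (2 * u t) :=
      add_pos (Real.rpow_pos_of_pos ht0 _) (mul_pos h1K (Real.exp_pos _))
    rw [hd]
    simp only [Pi.add_apply]
    field_simp
    ring
  -- G is constant: G t = G 1 for t in Ioc T 1
  have hconst : ∀ t ∈ Ioc T 1, G t = G 1 := by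
    intro t ht
    have hsub : Icc t 1 ⊆ Ioc T 1 := fun x hx => ⟨lt_of_lt_of_le ht.1 hx.1, hx.2⟩
    have hcont : ContinuousOn G (Icc t 1) := fun x hx =>
      ((hG x (hsub hx)).continuousAt).continuousWithinAt
    have := constant_of_has_deriv_right_zero hcont (fun x hx =>
      ((hG x (hsub ⟨hx.1, hx.2.le⟩)).hasDerivWithinAt)) 1 ⟨ht.2, le_refl 1⟩
    exact this.symm
  -- u monotone on Icc t 1 via nonneg derivative
  intro t ht
  have ht0 : 0 < t := htpos t ht
  constructor
  · -- lower bound from conservation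
    have h := hconst t ht
    rw [hGdef] at h
    simp only at h
    rw [Real.one_rpow] at h
    have hApos : 0 < t ^ (2*μ) + Real.exp (2 * u t) :=
      add_pos (Real.rpow_pos_of_pos ht0 _) (Real.exp_pos _)
    have hlog : 2 * u t ≤ Real.log (t ^ (2*μ) + Real.exp (2 * u t)) := by
      rw [Real.le_log_iff_exp_le hApos]
      have := Real.rpow_pos_of_pos ht0 (2*μ)
      linarith
    have hK2' : 0 ≤ K/2 := by linarith
    rw [div_le_iff₀ h1K]
    nlinarith [mul_le_mul_of_nonneg_left hlog hK2']
  · -- upper bound: monotone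
    have hsub : Icc t 1 ⊆ Ioc T 1 := fun x hx => ⟨lt_of_lt_of_le ht.1 hx.1, hx.2⟩
    have hmono : MonotoneOn u (Icc t 1) := by
      apply monotoneOn_of_deriv_nonneg (convex_Icc t 1)
      · exact fun x hx => ((hODE x (hsub hx)).continuousAt).continuousWithinAt
      · intro x hx
        rw [interior_Icc] at hx
        exact ((hODE x (hsub ⟨hx.1.le, hx.2.le⟩)).differentiableAt).differentiableWithinAt
      · intro x hx
        rw [interior_Icc] at hx
        have hx' : x ∈ Ioc T 1 := hsub ⟨hx.1.le, hx.2.le⟩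
        rw [(hODE x hx').deriv]
        have hxpos := htpos x hx'
        positivity
    exact hmono (left_mem_Icc.2 ht.2) (right_mem_Icc.2 ht.2) ht.2
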